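/- arXiv:1912.09679 — 6 statements merged into one kernel-verified Lean document; each statement's English description precedes it below -/
import Mathlib

section
/- Let a, b, r, F, ε, γ > 0, suppose D := (aγ − b + ε)² − 4aγε < 0, and let A be the real 2×2 matrix with rows (−a/ε, b/ε) and (−a/(γε), −(1/γ)(1 − b/ε)). Let λ₁ ∈ ℂ be the complex number (−aγ + b − ε − i√(−D))/(2γε) and v₁ ∈ ℂ² the vector ((aγ + b − ε + i√(−D))/(2a), 1)ᵀ. Then the real curves Φ₁(t) := Re(e^{λ₁ t} v₁) and Φ₂(t) := Im(e^{λ₁ t} v₁) both solve the homogeneous system Ẏ(t) = A·Y(t) for all t ∈ ℝ, and Φ₁(0), Φ₂(0) are linearly independent in ℝ², so Φ₁, Φ₂ form a solution basis. -/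
/-- when `D < 0`, with complex eigenvalue `λ₁` and eigenvector `v₁`,
the real curves `Φ₁(t) = Re(e^{λ₁ t} v₁)` and `Φ₂(t) = Im(e^{λ₁ t} v₁)` solve
`Ẏ = AY` and `Φ₁(0), Φ₂(0)` are linearly independent, forming a solution basis. -/
theorem beja_goldman_solution_basis_complex
    (a b r F ε γ : ℝ) (ha : 0 < a) (hb : 0 < b) (hr : 0 < r) (hF : 0 < F)
    (hε : 0 < ε) (hγ : 0 < γ)
    (D : ℝ) (hD : D = (a * γ - b + ε) ^ 2 - 4 * a * γ * ε) (hDneg : D < 0)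
    (A : Matrix (Fin 2) (Fin 2) ℝ)
    (hA : A = !![-a / ε, b / ε; -a / (γ * ε), -(1 / γ) * (1 - b / ε)])
    (lam1 : ℂ)
    (hlam1 : lam1 = (((-(a * γ) + b - ε : ℝ) : ℂ) - Complex.I * (Real.sqrt (-D) : ℂ))
        / ((2 * γ * ε : ℝ) : ℂ))
    (v1 : Fin 2 → ℂ)
    (hv1 : v1 = ![(((a * γ + b - ε : ℝ) : ℂ) + Complex.I * (Real.sqrt (-D) : ℂ))
        / ((2 * a : ℝ) : ℂ), 1])
    (Φ₁ Φ₂ : ℝ → Fin 2 → ℝ)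
    (hΦ₁ : Φ₁ = fun (t : ℝ) i => (Complex.exp (lam1 * (t : ℂ)) * v1 i).re)
    (hΦ₂ : Φ₂ = fun (t : ℝ) i => (Complex.exp (lam1 * (t : ℂ)) * v1 i).im) :
    (∀ t : ℝ, HasDerivAt Φ₁ (A.mulVec (Φ₁ t)) t) ∧
    (∀ t : ℝ, HasDerivAt Φ₂ (A.mulVec (Φ₂ t)) t) ∧
    LinearIndependent ℝ ![Φ₁ 0, Φ₂ 0] := by
  have ha' : (a : ℂ) ≠ 0 := Complex.ofReal_ne_zero.2 ha.ne'
  have hε' : (ε : ℂ) ≠ 0 := Complex.ofReal_ne_zero.2 hε.ne'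
  have hγ' : (γ : ℂ) ≠ 0 := Complex.ofReal_ne_zero.2 hγ.ne'
  set s : ℝ := Real.sqrt (-D) with hs_def
  have hspos : 0 < s := Real.sqrt_pos.2 (by linarith)
  have hs2 : (s : ℂ) ^ 2 = 4 * (a : ℂ) * γ * ε - ((a : ℂ) * γ - b + ε) ^ 2 := by
    have h1 : s ^ 2 = -D := Real.sq_sqrt (by linarith)
    rw [hD] at h1
    have h2 := congrArg (fun x : ℝ => (x : ℂ)) h1
    push_cast at h2
    rw [h2]; ring
  have hI : (Complex.I) ^ 2 = -1 := Complex.I_sq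
  -- the eigenvalue equation, componentwise
  have hkey : ∀ i, ((A i 0 : ℝ) : ℂ) * v1 0 + ((A i 1 : ℝ) : ℂ) * v1 1 = lam1 * v1 i := by
    intro i
    fin_cases i
    · simp only [hA, hv1, hlam1, Matrix.cons_val', Matrix.cons_val_zero, Matrix.cons_val_one,
        Matrix.head_cons, Matrix.empty_val', Matrix.cons_val_fin_one, Matrix.of_apply,
        Matrix.head_fin_const, Fin.isValue, Fin.zero_eta, Fin.mk_one]
      push_cast
      field_simp
      linear_combination ((s:ℂ)^2) * hI - hs2
    · simp only [hA, hv1, hlam1, Matrix.cons_val', Matrix.cons_val_zero, Matrix.cons_val_one,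
        Matrix.head_cons, Matrix.empty_val', Matrix.cons_val_fin_one, Matrix.of_apply,
        Matrix.head_fin_const, Fin.isValue, Fin.zero_eta, Fin.mk_one]
      push_cast
      field_simp
      ring
  -- derivative of the complex curve, componentwise
  have hderiv : ∀ (t : ℝ) (i : Fin 2),
      HasDerivAt (fun t : ℝ => Complex.exp (lam1 * (t : ℂ)) * v1 i)
        (lam1 * Complex.exp (lam1 * (t : ℂ)) * v1 i) t := by
    intro t i
    have h1 : HasDerivAt (fun z : ℂ => Complex.exp (lam1 * z))
        (Complex.exp (lam1 * (t : ℂ)) * lam1) (t : ℂ) := by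
      simpa using ((hasDerivAt_id ((t : ℝ) : ℂ)).const_mul lam1).cexp
    have h2 := (h1.comp_ofReal).mul_const (v1 i)
    convert h2 using 1
    · rfl
    · ring
  -- rewriting A.mulVec through the eigenvalue relation (real parts)
  have hre : ∀ (t : ℝ) (i : Fin 2),
      A.mulVec (Φ₁ t) i = (lam1 * Complex.exp (lam1 * (t : ℂ)) * v1 i).re := by
    intro t i
    have : A.mulVec (Φ₁ t) i
        = (((A i 0 : ℝ) : ℂ) * (Complex.exp (lam1 * (t : ℂ)) * v1 0)
          + ((A i 1 : ℝ) : ℂ) * (Complex.exp (lam1 * (t : ℂ)) * v1 1)).re := by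
      simp [Matrix.mulVec, dotProduct, Fin.sum_univ_two, hΦ₁,
        Complex.add_re]
    rw [this]
    congr 1
    have := hkey i
    calc ((A i 0 : ℝ) : ℂ) * (Complex.exp (lam1 * (t : ℂ)) * v1 0)
          + ((A i 1 : ℝ) : ℂ) * (Complex.exp (lam1 * (t : ℂ)) * v1 1)
        = Complex.exp (lam1 * (t : ℂ)) *
            (((A i 0 : ℝ) : ℂ) * v1 0 + ((A i 1 : ℝ) : ℂ) * v1 1) := by ring
      _ = lam1 * Complex.exp (lam1 * (t : ℂ)) * v1 i := by rw [this]; ring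
  have him : ∀ (t : ℝ) (i : Fin 2),
      A.mulVec (Φ₂ t) i = (lam1 * Complex.exp (lam1 * (t : ℂ)) * v1 i).im := by
    intro t i
    have : A.mulVec (Φ₂ t) i
        = (((A i 0 : ℝ) : ℂ) * (Complex.exp (lam1 * (t : ℂ)) * v1 0)
          + ((A i 1 : ℝ) : ℂ) * (Complex.exp (lam1 * (t : ℂ)) * v1 1)).im := by
      simp [Matrix.mulVec, dotProduct, Fin.sum_univ_two, hΦ₂,
        Complex.add_im]
    rw [this]
    congr 1
    have := hkey i
    calc ((A i 0 : ℝ) : ℂ) * (Complex.exp (lam1 * (t : ℂ)) * v1 0)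
          + ((A i 1 : ℝ) : ℂ) * (Complex.exp (lam1 * (t : ℂ)) * v1 1)
        = Complex.exp (lam1 * (t : ℂ)) *
            (((A i 0 : ℝ) : ℂ) * v1 0 + ((A i 1 : ℝ) : ℂ) * v1 1) := by ring
      _ = lam1 * Complex.exp (lam1 * (t : ℂ)) * v1 i := by rw [this]; ring
  refine ⟨?_, ?_, ?_⟩
  · intro t
    rw [hasDerivAt_pi]
    intro i
    have h := Complex.reCLM.hasFDerivAt.comp_hasDerivAt t (hderiv t i)
    have h' : HasDerivAt (fun t : ℝ => (Complex.exp (lam1 * (t : ℂ)) * v1 i).re)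
        ((lam1 * Complex.exp (lam1 * (t : ℂ)) * v1 i).re) t := h
    rw [hre t i, hΦ₁]
    exact h'
  · intro t
    rw [hasDerivAt_pi]
    intro i
    have h := Complex.imCLM.hasFDerivAt.comp_hasDerivAt t (hderiv t i)
    have h' : HasDerivAt (fun t : ℝ => (Complex.exp (lam1 * (t : ℂ)) * v1 i).im)
        ((lam1 * Complex.exp (lam1 * (t : ℂ)) * v1 i).im) t := h
    rw [him t i, hΦ₂]
    exact h'
  · rw [linearIndependent_fin2]
    constructor
    · simp only [Matrix.cons_val_one, Matrix.head_cons]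
      intro hcontra
      have := congrFun hcontra 0
      simp [hΦ₂, hv1, Complex.exp_zero, Complex.div_im, Complex.add_im,
        Complex.ofReal_re, Complex.ofReal_im, Complex.mul_im, Complex.I_re, Complex.I_im] at this
      have h2a : (2 * a) ≠ 0 := by positivity
      rcases this with h | h
      · exact hspos.ne' h
      · nlinarith
    · intro c hc
      have := congrFun hc 1
      simp only [Matrix.cons_val_one, Matrix.head_cons, Matrix.cons_val_zero,
        Pi.smul_apply, smul_eq_mul] at this
      rw [hΦ₁, hΦ₂] at this
      simp [hv1, Complex.exp_zero] at this
end

section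
/- Let a, b, r, F, ε, γ > 0 and let A be the real 2×2 matrix with rows (−a/ε, b/ε) and (−a/(γε), −(1/γ)(1 − b/ε)). Then every complex eigenvalue of A (viewed as a complex matrix) has strictly negative real part if and only if a > (b − ε)/γ. -/
/-- every complex eigenvalue of the Beja–Goldman matrix has strictly
negative real part iff `a > (b - ε)/γ` (stability criterion). -/
theorem beja_goldman_stability
    (a b r F ε γ : ℝ) (ha : 0 < a) (hb : 0 < b) (hr : 0 < r) (hF : 0 < F)
    (hε : 0 < ε) (hγ : 0 < γ)
    (A : Matrix (Fin 2) (Fin 2) ℝ)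
    (hA : A = !![-a / ε, b / ε; -a / (γ * ε), -(1 / γ) * (1 - b / ε)]) :
    (∀ lam : ℂ, lam ∈ spectrum ℂ (A.map (Complex.ofReal ·)) → lam.re < 0) ↔
      a > (b - ε) / γ := by
  set S : ℝ := a / ε + (1 / γ) * (1 - b / ε) with hSdef
  set D : ℝ := a / (γ * ε) with hDdef
  have hD : 0 < D := by positivity
  have hSeq : S = (a * γ + ε - b) / (γ * ε) := by
    rw [hSdef]; field_simp; ring
  have hmem : ∀ lam : ℂ, lam ∈ spectrum ℂ (A.map (Complex.ofReal ·)) ↔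
      lam ^ 2 + (S : ℝ) * lam + (D : ℝ) = 0 := by
    intro lam
    rw [spectrum.mem_iff, Matrix.isUnit_iff_isUnit_det, isUnit_iff_ne_zero, not_not]
    subst hA
    rw [Matrix.det_fin_two]
    simp [hSdef, hDdef, Matrix.algebraMap_matrix_apply, Matrix.map_apply]
    constructor <;> intro h <;> · rw [← h]; ring
  clear_value S D
  constructor
  · intro h
    by_contra hc
    push_neg at hc
    have hbε : a * γ ≤ b - ε := (le_div_iff₀ hγ).mp hc
    have hS : S ≤ 0 := by
      rw [hSeq]
      apply div_nonpos_of_nonpos_of_nonneg (by linarith) (by positivity)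
    by_cases hΔ : 0 ≤ S ^ 2 - 4 * D
    · set s := Real.sqrt (S ^ 2 - 4 * D) with hsdef
      have hs : s ^ 2 = S ^ 2 - 4 * D := Real.sq_sqrt hΔ
      have hs0 : 0 ≤ s := Real.sqrt_nonneg _
      clear_value s
      have hroot : (((-S + s) / 2 : ℝ) : ℂ) ∈ spectrum ℂ (A.map (Complex.ofReal ·)) := by
        rw [hmem]
        have : ((-S + s) / 2) ^ 2 + S * ((-S + s) / 2) + D = 0 := by
          linear_combination hs / 4
        exact_mod_cast congrArg (Complex.ofReal ·) this
      have := h _ hroot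
      simp only [Complex.ofReal_re] at this
      linarith
    · push_neg at hΔ
      set s := Real.sqrt (4 * D - S ^ 2) with hsdef
      have hs : s ^ 2 = 4 * D - S ^ 2 := Real.sq_sqrt (by linarith)
      clear_value s
      set lam : ℂ := ⟨-S / 2, s / 2⟩ with hlamdef
      have hroot : lam ∈ spectrum ℂ (A.map (Complex.ofReal ·)) := by
        rw [hmem]
        rw [Complex.ext_iff]
        constructor
        · simp [hlamdef, pow_two, Complex.mul_re, Complex.mul_im]
          linear_combination -hs / 4
        · simp [hlamdef, pow_two, Complex.mul_re, Complex.mul_im]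
          ring
      have := h _ hroot
      simp only [hlamdef] at this
      norm_num at this
      linarith
  · intro hcond lam hlam
    have hbε : b - ε < a * γ := (div_lt_iff₀ hγ).mp hcond
    have hS : 0 < S := by
      rw [hSeq]
      exact div_pos (by linarith) (by positivity)
    rw [hmem] at hlam
    rw [Complex.ext_iff] at hlam
    obtain ⟨h1, h2⟩ := hlam
    simp [pow_two, Complex.mul_re, Complex.mul_im] at h1 h2
    set x := lam.re
    set y := lam.im
    rcases eq_or_ne y 0 with hy | hy
    · rw [hy] at h1
      by_contra hx
      push_neg at hx
      nlinarith
    · have h2x : 2 * x + S = 0 := by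
        rcases mul_eq_zero.mp (show y * (2 * x + S) = 0 by linarith) with h | h
        · exact absurd h hy
        · exact h
      linarith
end

section
/- Let a, b, r, F, ε, γ > 0 with a > (b − ε)/γ, and let P, Ψ : ℝ → ℝ be differentiable functions satisfying, for all t ≥ 0, P'(t) = (1/ε)(a(F − P(t)) + b(Ψ(t) − r)) and Ψ'(t) = (1/γ)(P'(t) − Ψ(t)). Then P(t) → F − (b/a)·r and Ψ(t) → 0 as t → ∞. -/
open Filter

/-- Auxiliary: a planar linear system with negative trace and positive determinant
converges to the origin (Lyapunov function argument). -/
theorem lin2_converge (p q s u : ℝ) (hτ : p + u < 0) (hΔ : 0 < p * u - q * s)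
    (x y : ℝ → ℝ) (hxd : Differentiable ℝ x) (hyd : Differentiable ℝ y)
    (hx : ∀ t ≥ (0 : ℝ), HasDerivAt x (p * x t + q * y t) t)
    (hy : ∀ t ≥ (0 : ℝ), HasDerivAt y (s * x t + u * y t) t) :
    Tendsto x atTop (nhds 0) ∧ Tendsto y atTop (nhds 0) := by
  obtain ⟨Δ, hΔdef⟩ : ∃ Δ : ℝ, Δ = p * u - q * s := ⟨_, rfl⟩
  obtain ⟨τ, hτdef⟩ : ∃ τ : ℝ, τ = p + u := ⟨_, rfl⟩
  obtain ⟨m11, hm11⟩ : ∃ m : ℝ, m = Δ + u ^ 2 + s ^ 2 := ⟨_, rfl⟩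
  obtain ⟨m12, hm12⟩ : ∃ m : ℝ, m = -(u * q + s * p) := ⟨_, rfl⟩
  obtain ⟨m22, hm22⟩ : ∃ m : ℝ, m = Δ + q ^ 2 + p ^ 2 := ⟨_, rfl⟩
  obtain ⟨T, hTdef⟩ : ∃ T : ℝ, T = m11 + m22 := ⟨_, rfl⟩
  rw [← hΔdef] at hΔ
  rw [← hτdef] at hτ
  have hT0 : 0 < T := by
    rw [hTdef, hm11, hm22]
    nlinarith [sq_nonneg p, sq_nonneg q, sq_nonneg s, sq_nonneg u]
  obtain ⟨c, hcdef⟩ : ∃ c : ℝ, c = 2 * (-τ) * Δ / T := ⟨_, rfl⟩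
  have hc0 : 0 < c := by
    rw [hcdef]
    apply div_pos _ hT0
    have : 0 < -τ := by linarith
    nlinarith
  obtain ⟨V, hVdef⟩ : ∃ V : ℝ → ℝ,
      V = fun t => m11 * (x t * x t) + 2 * m12 * (x t * y t) + m22 * (y t * y t) := ⟨_, rfl⟩
  have hVd : Differentiable ℝ V := by
    rw [hVdef]
    exact (((hxd.mul hxd).const_mul m11).add ((hxd.mul hyd).const_mul (2 * m12))).add
      ((hyd.mul hyd).const_mul m22)
  have hVderiv : ∀ t ≥ (0 : ℝ),
      HasDerivAt V (2 * τ * Δ * (x t ^ 2 + y t ^ 2)) t := by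
    intro t ht
    have hx' := hx t ht
    have hy' := hy t ht
    have h := (((hx'.mul hx').const_mul m11).add ((hx'.mul hy').const_mul (2 * m12))).add
      ((hy'.mul hy').const_mul m22)
    rw [hVdef]
    refine h.congr_deriv ?_
    rw [hm11, hm12, hm22, hΔdef, hτdef]
    ring
  have hVlow : ∀ t, Δ * (x t ^ 2 + y t ^ 2) ≤ V t := by
    intro t
    simp only [hVdef, hm11, hm12, hm22]
    nlinarith [sq_nonneg (u * x t - q * y t), sq_nonneg (s * x t - p * y t)]
  have hVnn : ∀ t, 0 ≤ V t := by
    intro t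
    have := hVlow t
    nlinarith [sq_nonneg (x t), sq_nonneg (y t)]
  have hVup : ∀ t, V t ≤ T * (x t ^ 2 + y t ^ 2) := by
    intro t
    simp only [hVdef, hTdef, hm11, hm12, hm22]
    nlinarith [sq_nonneg (p * x t + s * y t), sq_nonneg (q * x t + u * y t),
      sq_nonneg (x t), sq_nonneg (y t)]
  -- key differential inequality
  have hkey : ∀ t, 2 * τ * Δ * (x t ^ 2 + y t ^ 2) + c * V t ≤ 0 := by
    intro t
    have h1 : c * V t ≤ 2 * (-τ) * Δ * (x t ^ 2 + y t ^ 2) := by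
      rw [hcdef, div_mul_eq_mul_div, div_le_iff₀ hT0]
      have h2 := hVup t
      have hτ' : 0 < -τ := by linarith
      have h3 := mul_le_mul_of_nonneg_left h2 (by positivity : (0:ℝ) ≤ 2 * (-τ) * Δ)
      nlinarith [h3]
    linarith
  -- Gronwall via antitonicity of W t = V t * exp (c t)
  obtain ⟨W, hWdef⟩ : ∃ W : ℝ → ℝ, W = fun t => V t * Real.exp (c * t) := ⟨_, rfl⟩
  have hWderiv : ∀ t ≥ (0 : ℝ), HasDerivAt W
      ((2 * τ * Δ * (x t ^ 2 + y t ^ 2) + c * V t) * Real.exp (c * t)) t := by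
    intro t ht
    have he : HasDerivAt (fun t : ℝ => Real.exp (c * t)) (Real.exp (c * t) * c) t := by
      simpa using ((hasDerivAt_id t).const_mul c).exp
    have h := (hVderiv t ht).mul he
    rw [hWdef]
    refine h.congr_deriv ?_
    ring
  have hWd : Differentiable ℝ W := by
    rw [hWdef]
    exact hVd.mul ((differentiable_id.const_mul c).exp)
  have hWanti : AntitoneOn W (Set.Ici (0 : ℝ)) := by
    apply antitoneOn_of_deriv_nonpos (convex_Ici 0) hWd.continuous.continuousOn
      hWd.differentiableOn
    intro t ht
    rw [interior_Ici] at ht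
    rw [(hWderiv t (le_of_lt ht)).deriv]
    exact mul_nonpos_of_nonpos_of_nonneg (hkey t) (Real.exp_pos (c * t)).le
  have hVbound : ∀ t ≥ (0 : ℝ), V t ≤ V 0 * Real.exp (-(c * t)) := by
    intro t ht
    have h := hWanti (Set.self_mem_Ici) ht ht
    rw [hWdef] at h
    simp only [mul_zero, Real.exp_zero, mul_one] at h
    rw [Real.exp_neg, ← sub_nonneg]
    have hep := Real.exp_pos (c * t)
    rw [← sub_nonneg] at h
    calc (0:ℝ) ≤ (V 0 - V t * Real.exp (c * t)) * (Real.exp (c * t))⁻¹ :=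
          mul_nonneg h (inv_nonneg.mpr hep.le)
      _ = V 0 * (Real.exp (c * t))⁻¹ - V t := by
          field_simp
  have hVtend : Tendsto V atTop (nhds 0) := by
    have hexp : Tendsto (fun t : ℝ => V 0 * Real.exp (-(c * t))) atTop (nhds 0) := by
      have h1 : Tendsto (fun t : ℝ => c * t) atTop atTop :=
        Tendsto.const_mul_atTop hc0 tendsto_id
      have h2 : Tendsto (fun t : ℝ => -(c * t)) atTop atBot :=
        tendsto_neg_atTop_atBot.comp h1
      have h3 := Real.tendsto_exp_atBot.comp h2
      simpa using h3.const_mul (V 0)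
    apply tendsto_of_tendsto_of_tendsto_of_le_of_le' tendsto_const_nhds hexp
    · exact Eventually.of_forall hVnn
    · filter_upwards [eventually_ge_atTop (0 : ℝ)] with t ht
      exact hVbound t ht
  -- extract convergence of x and y
  have hsq : ∀ f : ℝ → ℝ, (∀ t, Δ * f t ^ 2 ≤ V t) → Tendsto f atTop (nhds 0) := by
    intro f hf
    have h2 : Tendsto (fun t => V t / Δ) atTop (nhds 0) := by
      simpa using hVtend.div_const Δ
    have hsq2 : Tendsto (fun t => f t ^ 2) atTop (nhds 0) := by
      apply tendsto_of_tendsto_of_tendsto_of_le_of_le' tendsto_const_nhds h2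
      · exact Eventually.of_forall fun t => sq_nonneg (f t)
      · apply Eventually.of_forall
        intro t
        rw [le_div_iff₀ hΔ, mul_comm]
        exact hf t
    have habs : Tendsto (fun t => |f t|) atTop (nhds 0) := by
      have := (Real.continuous_sqrt.tendsto 0).comp hsq2
      simpa [Real.sqrt_sq_eq_abs, Function.comp_def] using this
    exact (tendsto_zero_iff_abs_tendsto_zero f).mpr habs
  constructor
  · apply hsq x
    intro t
    have := hVlow t
    nlinarith [sq_nonneg (y t)]
  · apply hsq y
    intro t
    have := hVlow t
    nlinarith [sq_nonneg (x t)]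

/-- in the stable regime `a > (b - ε)/γ`, every solution of the
Beja–Goldman system converges: `P(t) → F - (b/a)r` and `Ψ(t) → 0` as `t → ∞`. -/
theorem beja_goldman_convergence
    (a b r F ε γ : ℝ) (ha : 0 < a) (hb : 0 < b) (hr : 0 < r) (hF : 0 < F)
    (hε : 0 < ε) (hγ : 0 < γ) (hstab : a > (b - ε) / γ)
    (P Ψ : ℝ → ℝ) (hPdiff : Differentiable ℝ P) (hΨdiff : Differentiable ℝ Ψ)
    (hP : ∀ t ≥ (0 : ℝ),
      HasDerivAt P ((1 / ε) * (a * (F - P t) + b * (Ψ t - r))) t)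
    (hΨ : ∀ t ≥ (0 : ℝ),
      HasDerivAt Ψ ((1 / γ) * (deriv P t - Ψ t)) t) :
    Tendsto P atTop (nhds (F - (b / a) * r)) ∧ Tendsto Ψ atTop (nhds 0) := by
  have hτ : (-(a / ε)) + (b - ε) / (ε * γ) < 0 := by
    have e : (-(a / ε)) + (b - ε) / (ε * γ) = ((b - ε) / γ - a) / ε := by
      field_simp
      ring
    rw [e]
    exact div_neg_of_neg_of_pos (by linarith) hε
  have hΔ : 0 < (-(a / ε)) * ((b - ε) / (ε * γ)) - (b / ε) * (-(a / (ε * γ))) := by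
    have e : (-(a / ε)) * ((b - ε) / (ε * γ)) - (b / ε) * (-(a / (ε * γ)))
        = a / (ε * γ) := by
      field_simp
      ring
    rw [e]
    positivity
  have hx : ∀ t ≥ (0 : ℝ), HasDerivAt (fun t => P t - (F - (b / a) * r))
      ((-(a / ε)) * (P t - (F - (b / a) * r)) + (b / ε) * Ψ t) t := by
    intro t ht
    have h := (hP t ht).sub_const (F - (b / a) * r)
    refine h.congr_deriv ?_
    field_simp
    ring
  have hy : ∀ t ≥ (0 : ℝ), HasDerivAt Ψ
      ((-(a / (ε * γ))) * (P t - (F - (b / a) * r)) + ((b - ε) / (ε * γ)) * Ψ t) t := by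
    intro t ht
    have h := hΨ t ht
    rw [(hP t ht).deriv] at h
    convert h using 1
    field_simp
    ring
  have main := lin2_converge (-(a / ε)) (b / ε) (-(a / (ε * γ))) ((b - ε) / (ε * γ)) hτ hΔ
    (fun t => P t - (F - (b / a) * r)) Ψ (hPdiff.sub_const _) hΨdiff hx hy
  constructor
  · have h := main.1.add_const (F - (b / a) * r)
    simp only [zero_add, sub_add_cancel] at h
    exact h
  · exact main.2
end

section
/- Let a, b, r, F, ε, γ > 0 with a < (b − ε)/γ. Then there exist differentiable functions P, Ψ : ℝ → ℝ satisfying, for all t ≥ 0, P'(t) = (1/ε)(a(F − P(t)) + b(Ψ(t) − r)) and Ψ'(t) = (1/γ)(P'(t) − Ψ(t)), such that the solution is unbounded, i.e. sup over t ≥ 0 of |P(t)| + |Ψ(t)| is infinite. -/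
private lemma bg_aux (α β A B t : ℝ) :
    HasDerivAt (fun s => Real.exp (α*s) * (A*Real.cos (β*s) + B*Real.sin (β*s)))
      (Real.exp (α*t) * ((α*A + β*B)*Real.cos (β*t) + (α*B - β*A)*Real.sin (β*t))) t := by
  have hid : HasDerivAt (fun s : ℝ => α*s) α t := by
    simpa using (hasDerivAt_id t).const_mul α
  have hid2 : HasDerivAt (fun s : ℝ => β*s) β t := by
    simpa using (hasDerivAt_id t).const_mul β
  have he : HasDerivAt (fun s => Real.exp (α*s)) (Real.exp (α*t) * α) t :=
    (Real.hasDerivAt_exp (α*t)).comp t hid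
  have hc : HasDerivAt (fun s => Real.cos (β*s)) (-Real.sin (β*t) * β) t :=
    (Real.hasDerivAt_cos (β*t)).comp t hid2
  have hs : HasDerivAt (fun s => Real.sin (β*s)) (Real.cos (β*t) * β) t :=
    (Real.hasDerivAt_sin (β*t)).comp t hid2
  have := he.mul (((hc.const_mul A).add (hs.const_mul B)))
  refine this.congr_deriv ?_
  simp only [Pi.add_apply]
  ring

/-- reach lemma: in each eigenvalue case we can find times with cos(βt)=1 and αt large. -/
private lemma bg_reach (α β : ℝ) (hα : 0 < α) (hβ : 0 ≤ β) :
    ∀ S : ℝ, ∃ t ≥ (0:ℝ), Real.cos (β*t) = 1 ∧ S ≤ α*t := by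
  intro S
  rcases eq_or_lt_of_le hβ with h0 | hβpos
  · refine ⟨max 0 (S/α), le_max_left _ _, by simp [← h0], ?_⟩
    have : S/α ≤ max 0 (S/α) := le_max_right _ _
    calc S = α * (S/α) := by field_simp
    _ ≤ α * max 0 (S/α) := by nlinarith [le_max_right 0 (S/α)]
  · set T : ℝ := max 0 (S/α) with hT
    have hT0 : 0 ≤ T := le_max_left _ _
    set n : ℕ := ⌈T*β/(2*Real.pi)⌉₊ with hn
    refine ⟨2*Real.pi*n/β, by positivity, ?_, ?_⟩
    · have : β * (2*Real.pi*n/β) = n * (2*Real.pi) := by field_simp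
      rw [this, Real.cos_nat_mul_two_pi]
    · have h1 : T*β/(2*Real.pi) ≤ n := Nat.le_ceil _
      have hpi : 0 < 2*Real.pi := by positivity
      have h2 : T ≤ 2*Real.pi*n/β := by
        rw [le_div_iff₀ hβpos]
        calc T * β = T*β/(2*Real.pi) * (2*Real.pi) := by field_simp
        _ ≤ n * (2*Real.pi) := by nlinarith
        _ = 2*Real.pi*n := by ring
      have h3 : S/α ≤ T := le_max_right _ _
      calc S = α * (S/α) := by field_simp
      _ ≤ α * (2*Real.pi*n/β) := by nlinarith

/-- in the unstable regime `a < (b - ε)/γ` there exists an unbounded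
solution of the Beja–Goldman system. -/
theorem beja_goldman_unstable
    (a b r F ε γ : ℝ) (ha : 0 < a) (hb : 0 < b) (hr : 0 < r) (hF : 0 < F)
    (hε : 0 < ε) (hγ : 0 < γ) (hunst : a < (b - ε) / γ) :
    ∃ P Ψ : ℝ → ℝ, Differentiable ℝ P ∧ Differentiable ℝ Ψ ∧
      (∀ t ≥ (0 : ℝ),
        HasDerivAt P ((1 / ε) * (a * (F - P t) + b * (Ψ t - r))) t) ∧
      (∀ t ≥ (0 : ℝ),
        HasDerivAt Ψ ((1 / γ) * (deriv P t - Ψ t)) t) ∧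
      (∀ M : ℝ, ∃ t ≥ (0 : ℝ), M < |P t| + |Ψ t|) := by
  -- the trace-like coefficient
  set c : ℝ := b - ε - a*γ with hcdef
  have hc : 0 < c := by
    have h := (lt_div_iff₀ hγ).mp hunst
    simp only [hcdef]
    nlinarith
  -- choose eigen-data α, β
  obtain ⟨α, β, hα, hβ, E1, E2⟩ :
      ∃ α β : ℝ, 0 < α ∧ 0 ≤ β ∧ γ*ε*(α^2 - β^2) = c*α - a ∧ 2*(γ*ε)*α*β = c*β := by
    rcases le_or_gt (4*(γ*ε)*a) (c^2) with hd | hd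
    · -- real roots
      refine ⟨(c + Real.sqrt (c^2 - 4*(γ*ε)*a))/(2*(γ*ε)), 0, ?_, le_refl 0, ?_, by ring⟩
      · have h0 : 0 ≤ Real.sqrt (c^2 - 4*(γ*ε)*a) := Real.sqrt_nonneg _
        positivity
      · have hsq : Real.sqrt (c^2 - 4*(γ*ε)*a) ^ 2 = c^2 - 4*(γ*ε)*a :=
          Real.sq_sqrt (by linarith)
        have hge : (0:ℝ) < γ*ε := by positivity
        field_simp
        rw [show γ * ε * 4 * a = 4 * (γ * ε) * a by ring]
        nlinarith [hsq]
    · -- complex roots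
      refine ⟨c/(2*(γ*ε)), Real.sqrt (4*(γ*ε)*a - c^2)/(2*(γ*ε)), by positivity,
        by positivity, ?_, by field_simp⟩
      have hsq : Real.sqrt (4*(γ*ε)*a - c^2) ^ 2 = 4*(γ*ε)*a - c^2 :=
        Real.sq_sqrt (by linarith)
      have hge : (0:ℝ) < γ*ε := by positivity
      field_simp
      rw [show γ * ε * 4 * a = 4 * (γ * ε) * a by ring]
      nlinarith [hsq]
  -- the solution
  set Pstar : ℝ := F - b*r/a with hPs
  set A : ℝ := (a + ε*α)/b with hA
  set B : ℝ := -(ε*β)/b with hB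
  refine ⟨fun t => Pstar + Real.exp (α*t) * (1*Real.cos (β*t) + 0*Real.sin (β*t)),
    fun t => Real.exp (α*t) * (A*Real.cos (β*t) + B*Real.sin (β*t)), ?_, ?_, ?_, ?_, ?_⟩
  · exact fun t => ((bg_aux α β 1 0 t).const_add Pstar).differentiableAt
  · exact fun t => (bg_aux α β A B t).differentiableAt
  · intro t _
    have h := (bg_aux α β 1 0 t).const_add Pstar
    refine h.congr_deriv ?_
    have haa : a ≠ 0 := ne_of_gt ha
    have hbb : b ≠ 0 := ne_of_gt hb
    have hee : ε ≠ 0 := ne_of_gt hε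
    simp only [hA, hB, hPs]
    field_simp
    ring
  · intro t _
    have hderiv : deriv (fun t => Pstar + Real.exp (α*t) * (1*Real.cos (β*t) + 0*Real.sin (β*t))) t
        = Real.exp (α*t) * ((α*1 + β*0)*Real.cos (β*t) + (α*0 - β*1)*Real.sin (β*t)) :=
      ((bg_aux α β 1 0 t).const_add Pstar).deriv
    rw [hderiv]
    have h := bg_aux α β A B t
    refine h.congr_deriv ?_
    have hbb : b ≠ 0 := ne_of_gt hb
    have hgg : γ ≠ 0 := ne_of_gt hγ
    have hE1' : γ*(a*α + ε*(α^2 - β^2)) = (b-ε)*α - a := by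
      rw [hcdef] at E1; linear_combination E1
    have hE2' : γ*(β*(a + 2*ε*α)) = (b-ε)*β := by
      rw [hcdef] at E2; linear_combination E2
    simp only [hA, hB]
    field_simp
    rw [mul_comm t β]
    linear_combination (Real.cos (β*t)) * hE1' -
      (Real.sin (β*t)) * hE2'
  · intro M
    obtain ⟨t, ht0, hcos, hαt⟩ := bg_reach α β hα hβ (max 0 (M + |Pstar|))
    refine ⟨t, ht0, ?_⟩
    have hexp : M + |Pstar| < Real.exp (α*t) := by
      have h1 : α*t + 1 ≤ Real.exp (α*t) := Real.add_one_le_exp _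
      have h2 : M + |Pstar| ≤ max 0 (M + |Pstar|) := le_max_right _ _
      linarith
    have hy : (1:ℝ)*Real.cos (β*t) + 0*Real.sin (β*t) = 1 := by rw [hcos]; ring
    show M < |Pstar + Real.exp (α*t) * (1*Real.cos (β*t) + 0*Real.sin (β*t))| +
      |Real.exp (α*t) * (A*Real.cos (β*t) + B*Real.sin (β*t))|
    rw [hy]
    have key : Real.exp (α*t) - |Pstar| ≤ |Pstar + Real.exp (α*t) * 1| := by
      have h := abs_sub_abs_le_abs_sub (Real.exp (α*t)*1) (-Pstar)
      rw [abs_neg, sub_neg_eq_add, add_comm] at h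
      have h4 : |Real.exp (α*t)*1| = Real.exp (α*t)*1 := abs_of_pos (by positivity)
      linarith
    linarith [abs_nonneg (Real.exp (α*t) * (A*Real.cos (β*t) + B*Real.sin (β*t))), key, hexp]
end

section
/- Let a, b, r, F, γ > 0 with aγ > b, and let Ψ₀ ∈ ℝ and P₀ := (b/a)(Ψ₀ − r) + F (so the initial data lie on the slow manifold). For each ε > 0 let (P_ε, Ψ_ε) : [0, ∞) → ℝ² be the solution of the Beja–Goldman system P' = (1/ε)(a(F − P) + b(Ψ − r)), Ψ' = (1/γ)(P' − Ψ) with P_ε(0) = P₀, Ψ_ε(0) = Ψ₀, and let Ψ̄(t) := Ψ₀·exp(−(a/(aγ − b))·t) and P̄(t) := (b/a)(Ψ̄(t) − r) + F be the solution of the reduced system. Then for every t₀ > 0, sup over t ≥ t₀ of (|P_ε(t) − P̄(t)| + |Ψ_ε(t) − Ψ̄(t)|) tends to 0 as ε → 0⁺. -/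
/-- Solution of the scalar linear ODE `w' = λ w` on `[0, ∞)`. -/
lemma bg_linear_ode_sol (w : ℝ → ℝ) (lam : ℝ)
    (h : ∀ s ≥ (0:ℝ), HasDerivAt w (lam * w s) s) :
    ∀ t ≥ (0:ℝ), w t = w 0 * Real.exp (lam * t) := by
  intro t ht
  set g : ℝ → ℝ := fun s => w s * Real.exp (-lam * s) with hg
  have hderiv : ∀ s ≥ (0:ℝ), HasDerivAt g 0 s := by
    intro s hs
    have h1 := (h s hs).mul ((Real.hasDerivAt_exp (-lam * s)).comp s
      ((hasDerivAt_id s).const_mul (-lam)))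
    convert h1 using 1
    · rfl
    · rfl
    · funext y; simp [g, Function.comp]
    · simp [Function.comp]
      ring
  have h2 : w t * Real.exp (-lam * t) = w 0 * Real.exp (-lam * 0) :=
    constant_of_has_deriv_right_zero
      (fun x hx => ((hderiv x hx.1).continuousAt).continuousWithinAt)
      (fun x hx => (hderiv x hx.1).hasDerivWithinAt) t ⟨ht, le_refl t⟩
  have h3 : Real.exp (-lam * t) * Real.exp (lam * t) = 1 := by
    rw [← Real.exp_add]; ring_nf; exact Real.exp_zero
  calc w t = w t * (Real.exp (-lam * t) * Real.exp (lam * t)) := by rw [h3]; ring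
    _ = (w t * Real.exp (-lam * t)) * Real.exp (lam * t) := by ring
    _ = w 0 * Real.exp (lam * t) := by rw [h2]; simp

/-- The key eigen-identity for the Beja–Goldman system. -/
lemma bg_key_identity (a b r F γ ε lam Pv V : ℝ) (ha : 0 < a) (hγ : 0 < γ) (hε : 0 < ε)
    (hq : ε*γ*lam^2 + ((a*γ-b)+ε)*lam + a = 0) :
    (a*γ*lam+a) * ((1/ε)*(a*(F-Pv)+b*(V-r)) - (b/a)*((1/γ)*((1/ε)*(a*(F-Pv)+b*(V-r)) - V)))
      + b*((1/γ)*((1/ε)*(a*(F-Pv)+b*(V-r)) - V))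
    = lam * ((a*γ*lam+a) * (Pv - ((b/a)*(V-r)+F)) + b*V) := by
  have hane : a ≠ 0 := ne_of_gt ha
  have hγne : γ ≠ 0 := ne_of_gt hγ
  have hεne : ε ≠ 0 := ne_of_gt hε
  field_simp
  linear_combination (γ*(a*(F-Pv)+b*(V-r))) * hq

/-- for `aγ > b` and initial data on the slow manifold, the
solutions of the full Beja–Goldman system converge, uniformly on `[t₀, ∞)` for
every `t₀ > 0`, to the solution of the reduced liquid-market system as `ε → 0⁺`. -/
theorem beja_goldman_liquid_market_tikhonov
    (a b r F γ : ℝ) (ha : 0 < a) (hb : 0 < b) (hr : 0 < r) (hF : 0 < F)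
    (hγ : 0 < γ) (hstab : a * γ > b)
    (Ψ₀ P₀ : ℝ) (hP₀ : P₀ = (b / a) * (Ψ₀ - r) + F)
    (P Ψ : ℝ → ℝ → ℝ)
    (hode : ∀ ε > (0 : ℝ), ∀ t ≥ (0 : ℝ),
      HasDerivAt (P ε) ((1 / ε) * (a * (F - P ε t) + b * (Ψ ε t - r))) t ∧
      HasDerivAt (Ψ ε)
        ((1 / γ) * ((1 / ε) * (a * (F - P ε t) + b * (Ψ ε t - r)) - Ψ ε t)) t)
    (hinit : ∀ ε > (0 : ℝ), P ε 0 = P₀ ∧ Ψ ε 0 = Ψ₀)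
    (Ψbar Pbar : ℝ → ℝ)
    (hΨbar : Ψbar = fun t => Ψ₀ * Real.exp (-(a / (a * γ - b)) * t))
    (hPbar : Pbar = fun t => (b / a) * (Ψbar t - r) + F) :
    ∀ t₀ > (0 : ℝ), ∀ δ > (0 : ℝ), ∃ ε₀ > (0 : ℝ), ∀ ε : ℝ, 0 < ε → ε < ε₀ →
      ∀ t ≥ t₀, |P ε t - Pbar t| + |Ψ ε t - Ψbar t| < δ := by
  intro t₀ ht₀ δ hδ
  have hane : a ≠ 0 := ne_of_gt ha
  have hγne : γ ≠ 0 := ne_of_gt hγ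
  obtain ⟨d, hd_def⟩ : ∃ d : ℝ, d = a * γ - b := ⟨_, rfl⟩
  rw [← hd_def] at hΨbar
  have hd : 0 < d := by rw [hd_def]; linarith only [hstab]
  have hdne : d ≠ 0 := ne_of_gt hd
  obtain ⟨CU, hCU_def⟩ : ∃ c : ℝ, c = 2*b*|Ψ₀|/(a*d) := ⟨_, rfl⟩
  have hCU : 0 ≤ CU := by rw [hCU_def]; positivity
  obtain ⟨K, hK_def⟩ : ∃ c : ℝ, c = 4*γ*a^2/d^3 := ⟨_, rfl⟩
  have hK : 0 ≤ K := by rw [hK_def]; positivity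
  obtain ⟨CV, hCV_def⟩ : ∃ c : ℝ, c = |Ψ₀| * K * (d/a) + ((2*γ*a^2/d + a)/b) * CU := ⟨_, rfl⟩
  have hCV : 0 ≤ CV := by rw [hCV_def]; positivity
  have hCVKCU : CV = |Ψ₀| * K * (d/a) + ((2*γ*a^2/d + a)/b) * CU := hCV_def
  obtain ⟨C, hC_def⟩ : ∃ c : ℝ, c = CU + (1 + b/a) * CV := ⟨_, rfl⟩
  have hC : 0 ≤ C := by rw [hC_def]; positivity
  refine ⟨min (d^2/(8*γ*a)) (δ/(C+1)), lt_min (by positivity) (by positivity), ?_⟩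
  intro ε hε hεlt t htt₀
  have ht : 0 < t := lt_of_lt_of_le ht₀ htt₀
  have ht0le : (0:ℝ) ≤ t := le_of_lt ht
  have hεne : ε ≠ 0 := ne_of_gt hε
  have hεsmall : ε * (8*γ*a) < d^2 :=
    (lt_div_iff₀ (by positivity)).mp (lt_of_lt_of_le hεlt (min_le_left _ _))
  have hεδ : ε * (C+1) < δ :=
    (lt_div_iff₀ (by positivity)).mp (lt_of_lt_of_le hεlt (min_le_right _ _))
  -- eigenvalues of the full system
  obtain ⟨Δ, hΔ_def⟩ : ∃ c : ℝ, c = (d+ε)^2 - 4*ε*γ*a := ⟨_, rfl⟩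
  have hΔhalf : d^2/2 ≤ Δ := by
    rw [hΔ_def]
    nlinarith only [hεsmall, hε, sq_nonneg ε, mul_pos hd hε]
  have hΔpos : 0 < Δ := lt_of_lt_of_le (by positivity : (0:ℝ) < d^2/2) hΔhalf
  have hΔq : (d/2)^2 ≤ Δ :=
    le_trans (by linarith only [sq_nonneg d]) hΔhalf
  obtain ⟨sq, hsq_def⟩ : ∃ c : ℝ, c = Real.sqrt Δ := ⟨_, rfl⟩
  have hs2 : sq^2 = Δ := by rw [hsq_def]; exact Real.sq_sqrt hΔpos.le
  have hspos : 0 < sq := by rw [hsq_def]; exact Real.sqrt_pos.mpr hΔpos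
  have hsge : d/2 ≤ sq := by
    have h1 : Real.sqrt ((d/2)^2) ≤ Real.sqrt Δ := Real.sqrt_le_sqrt hΔq
    rw [Real.sqrt_sq (by positivity : (0:ℝ) ≤ d/2)] at h1
    rw [hsq_def]
    exact h1
  obtain ⟨lams, hlams_def⟩ : ∃ c : ℝ, c = (-(d+ε) + sq)/(2*ε*γ) := ⟨_, rfl⟩
  obtain ⟨lamf, hlamf_def⟩ : ∃ c : ℝ, c = (-(d+ε) - sq)/(2*ε*γ) := ⟨_, rfl⟩
  obtain ⟨lamb, hlamb_def⟩ : ∃ c : ℝ, c = -(a/d) := ⟨_, rfl⟩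
  rw [show -(a/d) = lamb * 1 by rw [hlamb_def]; ring] at hΨbar
  simp only [mul_one] at hΨbar
  have hlamb_neg : lamb < 0 := by
    rw [hlamb_def]; have h0 : 0 < a/d := by positivity
    linarith only [h0]
  have hdlamb : d * lamb = -a := by
    rw [hlamb_def]
    field_simp
  have hfact : ∀ x : ℝ, ε*γ*(x - lams)*(x - lamf) = ε*γ*x^2 + (d+ε)*x + a := by
    intro x
    have hs2' : sq^2 = (d+ε)^2 - 4*ε*γ*a := by rw [hs2, hΔ_def]
    rw [hlams_def, hlamf_def]
    field_simp
    linear_combination (-1) * hs2'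
  have hcalcb : d^2 * (ε*γ*lamb^2 + (d+ε)*lamb + a) = ε*a*b := by
    linear_combination (ε*γ*(d*lamb - a) + d^2 + ε*d) * hdlamb + (-(ε*a)) * hd_def
  have hqb_pos : 0 < ε*γ*lamb^2 + (d+ε)*lamb + a := by
    nlinarith only [hcalcb, mul_pos (mul_pos hε ha) hb, mul_pos hd hd]
  have hcalc2 : d^2 * (ε*γ*(2*lamb)^2 + (d+ε)*(2*lamb) + a) = 4*ε*γ*a^2 - a*d^2 - 2*ε*a*d := by
    linear_combination (4*ε*γ*(d*lamb - a) + 2*(d+ε)*d) * hdlamb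
  have hq2b_neg : ε*γ*(2*lamb)^2 + (d+ε)*(2*lamb) + a < 0 := by
    have hR : 4*ε*γ*a^2 - a*d^2 - 2*ε*a*d < 0 := by
      have hm := mul_lt_mul_of_pos_left hεsmall ha
      have hp : (0:ℝ) ≤ ε*γ*a^2 := by positivity
      have hq : (0:ℝ) < ε*a*d := by positivity
      linarith only [hm, hp, hq]
    nlinarith only [hcalc2, hR, mul_pos hd hd]
  have hprod2 : (2*lamb - lams)*(2*lamb - lamf) < 0 := by
    have h := hfact (2*lamb)
    nlinarith only [h, hq2b_neg, mul_pos hε hγ]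
  have hprodb : 0 < (lamb - lams)*(lamb - lamf) := by
    have h := hfact lamb
    nlinarith only [h, hqb_pos, mul_pos hε hγ]
  have hfs : lamf < lams := by
    rw [hlams_def, hlamf_def]
    exact (div_lt_div_iff_of_pos_right (by positivity)).mpr (by linarith only [hspos])
  have hlams2b : 2*lamb < lams := by nlinarith only [hprod2, hfs]
  have hlamf2b : lamf < 2*lamb := by nlinarith only [hprod2, hfs]
  have hbf : 0 < lamb - lamf := by linarith only [hlamf2b, hlamb_neg]
  have hlamsb : lams < lamb := by nlinarith only [hprodb, hbf]
  have hlams_neg : lams < 0 := lt_trans hlamsb hlamb_neg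
  have hlamf_neg : lamf < 0 := by linarith only [hlamf2b, hlamb_neg]
  have hgap : d/(2*(ε*γ)) ≤ lams - lamf := by
    have hlf : lams - lamf = sq/(ε*γ) := by
      rw [hlams_def, hlamf_def]; field_simp; ring
    rw [show d/(2*(ε*γ)) = (d/2)/(ε*γ) by ring, hlf]
    exact (div_le_div_iff_of_pos_right (by positivity)).mpr hsge
  have hqs : ε*γ*lams^2 + (d+ε)*lams + a = 0 := by
    have h := hfact lams; linarith only [h]
  have hqf : ε*γ*lamf^2 + (d+ε)*lamf + a = 0 := by
    have h := hfact lamf; linarith only [h]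
  -- |lams| ≤ 2a/d and lamb - lams ≤ ε K
  have h2l : -(2*(a/d)) < lams := by
    have h := hlams2b; rw [hlamb_def] at h; linarith only [h]
  have hlams_sq : lams^2 ≤ 4*(a/d)^2 := by
    nlinarith only [h2l, hlams_neg, div_pos ha hd]
  have hkey : d*(lamb - lams) = ε*γ*lams^2 + ε*lams := by
    linear_combination hdlamb - hqs
  have hclose : lamb - lams ≤ ε * K := by
    have h1 : d*(lamb - lams) ≤ ε*γ*(4*(a/d)^2) := by
      have ha1 : ε*γ*lams^2 ≤ ε*γ*(4*(a/d)^2) :=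
        mul_le_mul_of_nonneg_left hlams_sq (by positivity)
      have ha2 : ε*lams ≤ 0 := mul_nonpos_of_nonneg_of_nonpos hε.le hlams_neg.le
      linarith only [hkey, ha1, ha2]
    have h7 : lamb - lams ≤ ε*γ*(4*(a/d)^2)/d := by
      rw [le_div_iff₀ hd]; linarith only [h1]
    have heq : ε*γ*(4*(a/d)^2)/d = ε * K := by rw [hK_def]; field_simp
    rw [← heq]; exact h7
  -- solving the full system via left eigenvectors
  have hwsol : ∀ lam : ℝ, (ε*γ*lam^2 + (d+ε)*lam + a = 0) → ∀ τ ≥ (0:ℝ),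
      (a*γ*lam + a) * (P ε τ - ((b/a)*(Ψ ε τ - r) + F)) + b * Ψ ε τ
        = b * Ψ₀ * Real.exp (lam * τ) := by
    intro lam hqlam
    rw [hd_def] at hqlam
    have hderivw : ∀ τ ≥ (0:ℝ), HasDerivAt
        (fun y => (a*γ*lam + a) * (P ε y - ((b/a)*(Ψ ε y - r) + F)) + b * Ψ ε y)
        (lam * ((a*γ*lam + a) * (P ε τ - ((b/a)*(Ψ ε τ - r) + F)) + b * Ψ ε τ)) τ := by
      intro τ hτ
      obtain ⟨hP', hΨ'⟩ := hode ε hε τ hτ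
      have hw := ((hP'.sub (((hΨ'.sub_const r).const_mul (b/a)).add_const F)).const_mul
        (a*γ*lam + a)).add (hΨ'.const_mul b)
      have hval := bg_key_identity a b r F γ ε lam (P ε τ) (Ψ ε τ) ha hγ hε hqlam
      exact hval ▸ hw
    have hsol := bg_linear_ode_sol _ lam hderivw
    intro τ hτ
    have h := hsol τ hτ
    rw [h, (hinit ε hε).1, (hinit ε hε).2, hP₀]
    ring
  have eq1 := hwsol lams hqs t ht0le
  have eq2 := hwsol lamf hqf t ht0le
  obtain ⟨U, hU_def⟩ : ∃ c : ℝ, c = P ε t - ((b/a)*(Ψ ε t - r) + F) := ⟨_, rfl⟩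
  rw [show P ε t - ((b/a)*(Ψ ε t - r) + F) = U by rw [hU_def]] at eq1 eq2
  -- bound on |U|
  have hE1pos : 0 < Real.exp (lams*t) := Real.exp_pos _
  have hE2pos : 0 < Real.exp (lamf*t) := Real.exp_pos _
  have hE1le : Real.exp (lams*t) ≤ 1 :=
    Real.exp_le_one_iff.mpr (mul_nonpos_of_nonpos_of_nonneg hlams_neg.le ht0le)
  have hE2le : Real.exp (lamf*t) ≤ 1 :=
    Real.exp_le_one_iff.mpr (mul_nonpos_of_nonpos_of_nonneg hlamf_neg.le ht0le)
  have hUeq : a*γ*(lams - lamf) * U = b*Ψ₀*(Real.exp (lams*t) - Real.exp (lamf*t)) := by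
    linear_combination eq1 - eq2
  have hUbound : |U| ≤ ε * CU := by
    have h1 : |a*γ*(lams-lamf)| * |U| = |b*Ψ₀| * |Real.exp (lams*t) - Real.exp (lamf*t)| := by
      rw [← abs_mul, hUeq, abs_mul]
    have h2 : |Real.exp (lams*t) - Real.exp (lamf*t)| ≤ 1 := by
      rw [abs_le]
      constructor <;> linarith only [hE1pos, hE2pos, hE1le, hE2le]
    have h3 : a*d/(2*ε) ≤ a*γ*(lams - lamf) := by
      have hm := mul_le_mul_of_nonneg_left hgap (by positivity : (0:ℝ) ≤ a*γ)
      have heq : a*γ*(d/(2*(ε*γ))) = a*d/(2*ε) := by field_simp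
      rw [heq] at hm
      exact hm
    have h4 : 0 < a*d/(2*ε) := by positivity
    have h5 : |a*γ*(lams-lamf)| = a*γ*(lams-lamf) :=
      abs_of_pos (by linarith only [h3, h4])
    have habsb : |b*Ψ₀| = b*|Ψ₀| := by rw [abs_mul, abs_of_pos hb]
    have h6 : |U| * (a*d/(2*ε)) ≤ b*|Ψ₀| := by
      nlinarith only [h1, h2, h3, h5, habsb, abs_nonneg U, abs_nonneg (b*Ψ₀)]
    have h7 := (le_div_iff₀ h4).mpr h6
    have heq2 : b*|Ψ₀| / (a*d/(2*ε)) = ε * CU := by rw [hCU_def]; field_simp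
    rw [heq2] at h7
    exact h7
  -- bound on |Ψ ε t - Ψbar t|
  have hΨbar_t : Ψbar t = Ψ₀ * Real.exp (lamb * t) := by rw [hΨbar]
  have hEbpos : 0 < Real.exp (lamb*t) := Real.exp_pos _
  have hEbE1 : Real.exp (lamb*t) - Real.exp (lams*t)
      ≤ (lamb - lams) * (t * Real.exp (lamb*t)) := by
    have h1 : (lams-lamb)*t + 1 ≤ Real.exp ((lams-lamb)*t) := Real.add_one_le_exp _
    have h2 : Real.exp (lams*t) = Real.exp (lamb*t) * Real.exp ((lams-lamb)*t) := by
      rw [← Real.exp_add]; ring_nf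
    nlinarith only [hEbpos, h1, h2]
  have htEb : t * Real.exp (lamb*t) ≤ d/a := by
    have h1 : (a/d)*t + 1 ≤ Real.exp ((a/d)*t) := Real.add_one_le_exp _
    have h2 : Real.exp (lamb*t) * Real.exp ((a/d)*t) = 1 := by
      rw [← Real.exp_add, hlamb_def]
      ring_nf
      exact Real.exp_zero
    have had : (d/a)*((a/d)*t+1) = t + d/a := by field_simp
    have h5 : t * Real.exp (lamb*t) * Real.exp ((a/d)*t) = t := by
      linear_combination t * h2
    have h6 : t + d/a ≤ (d/a) * Real.exp ((a/d)*t) := by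
      have hm := mul_le_mul_of_nonneg_left h1 (le_of_lt (div_pos hd ha))
      rw [had] at hm
      exact hm
    nlinarith only [h5, h6, Real.exp_pos ((a/d)*t), div_pos hd ha]
  have hVbound : |Ψ ε t - Ψbar t| ≤ ε * CV := by
    have hVeq : b*(Ψ ε t - Ψ₀*Real.exp (lams*t)) = -((a*γ*lams + a) * U) := by
      linear_combination eq1
    have h1 : b * |Ψ ε t - Ψ₀*Real.exp (lams*t)| = |a*γ*lams + a| * |U| := by
      have h := congrArg abs hVeq
      rwa [abs_mul, abs_neg, abs_mul, abs_of_pos hb] at h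
    have hlamb2 : a*γ*(2*lamb) = -(2*γ*a^2/d) := by rw [hlamb_def]; ring
    have h2 : |a*γ*lams + a| ≤ 2*γ*a^2/d + a := by
      rw [abs_le]
      constructor
      · have hm := mul_le_mul_of_nonneg_left hlams2b.le (by positivity : (0:ℝ) ≤ a*γ)
        rw [hlamb2] at hm
        linarith only [hm, ha.le]
      · have hneg : a*γ*lams ≤ 0 :=
          mul_nonpos_of_nonneg_of_nonpos (by positivity) hlams_neg.le
        have hp : (0:ℝ) ≤ 2*γ*a^2/d := by positivity
        linarith only [hneg, hp]
    have h3' : |a*γ*lams + a| * |U| ≤ (2*γ*a^2/d + a) * (ε*CU) :=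
      mul_le_mul h2 hUbound (abs_nonneg U) (by positivity)
    have h3 : |Ψ ε t - Ψ₀*Real.exp (lams*t)| ≤ ((2*γ*a^2/d + a)/b) * (ε*CU) := by
      rw [div_mul_eq_mul_div, le_div_iff₀ hb]
      linarith only [h1, h3']
    have hmono : Real.exp (lams*t) ≤ Real.exp (lamb*t) :=
      Real.exp_le_exp.mpr (mul_le_mul_of_nonneg_right hlamsb.le ht0le)
    have h4 : |Ψ₀*(Real.exp (lamb*t) - Real.exp (lams*t))| ≤ |Ψ₀| * (ε*K*(d/a)) := by
      rw [abs_mul]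
      apply mul_le_mul_of_nonneg_left _ (abs_nonneg _)
      rw [abs_of_nonneg (by linarith only [hmono])]
      calc Real.exp (lamb*t) - Real.exp (lams*t)
          ≤ (lamb - lams)*(t*Real.exp (lamb*t)) := hEbE1
        _ ≤ (ε*K)*(d/a) := mul_le_mul hclose htEb (by positivity) (mul_nonneg hε.le hK)
        _ = ε*K*(d/a) := by ring
    have htri : |Ψ ε t - Ψ₀*Real.exp (lamb*t)| ≤
        |Ψ ε t - Ψ₀*Real.exp (lams*t)| + |Ψ₀*(Real.exp (lamb*t) - Real.exp (lams*t))| := by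
      have h := abs_sub_le (Ψ ε t) (Ψ₀*Real.exp (lams*t)) (Ψ₀*Real.exp (lamb*t))
      have heq : |Ψ₀*Real.exp (lams*t) - Ψ₀*Real.exp (lamb*t)|
          = |Ψ₀*(Real.exp (lamb*t) - Real.exp (lams*t))| := by
        rw [abs_sub_comm]; congr 1; ring
      rw [heq] at h
      exact h
    rw [hΨbar_t]
    have hfinal : |Ψ₀| * (ε*K*(d/a)) + ((2*γ*a^2/d + a)/b) * (ε*CU) = ε * CV := by
      rw [hCV_def]; ring
    linarith only [htri, h3, h4, hfinal]
  -- conclusion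
  have hPdiff : P ε t - Pbar t = U + (b/a)*(Ψ ε t - Ψbar t) := by
    rw [hPbar, hU_def]; ring
  have hstep : |P ε t - Pbar t| ≤ |U| + (b/a)*|Ψ ε t - Ψbar t| := by
    rw [hPdiff]
    have h := abs_add_le U ((b/a)*(Ψ ε t - Ψbar t))
    rwa [abs_mul, abs_of_pos (by positivity : (0:ℝ) < b/a)] at h
  have hba : (0:ℝ) ≤ b/a := by positivity
  have hmul := mul_le_mul_of_nonneg_left hVbound hba
  calc |P ε t - Pbar t| + |Ψ ε t - Ψbar t|
      ≤ (|U| + (b/a)*|Ψ ε t - Ψbar t|) + |Ψ ε t - Ψbar t| := by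
        linarith only [hstep]
    _ ≤ ε*CU + (b/a)*(ε*CV) + ε*CV := by linarith only [hUbound, hmul, hVbound]
    _ = ε * C := by rw [hC_def]; ring
    _ < δ := by linarith only [hεδ, hε]
end

section
/- Let a, b, r, F, ε > 0 with ε > b, and let P₀ ∈ ℝ and Ψ₀ := (a(F − P₀) − rb)/(ε − b) (so the initial data lie on the slow manifold). For each γ > 0 let (P_γ, Ψ_γ) : [0, ∞) → ℝ² be the solution of the Beja–Goldman system P' = (1/ε)(a(F − P) + b(Ψ − r)), Ψ' = (1/γ)(P' − Ψ) with P_γ(0) = P₀, Ψ_γ(0) = Ψ₀, and let P̄(t) := exp(−(a/(ε − b))·t)·(P₀ − (F − rb/a)) + F − rb/a and Ψ̄(t) := (a(F − P̄(t)) − rb)/(ε − b) be the solution of the reduced system. Then for every t₀ > 0, sup over t ≥ t₀ of (|P_γ(t) − P̄(t)| + |Ψ_γ(t) − Ψ̄(t)|) tends to 0 as γ → 0⁺. -/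
open Set
set_option maxHeartbeats 1000000

private lemma mono_Ici_bg {f f' : ℝ → ℝ}
    (hd : ∀ s ∈ Ici (0:ℝ), HasDerivAt f (f' s) s)
    (hpos : ∀ s ∈ Ici (0:ℝ), 0 ≤ f' s) :
    MonotoneOn f (Ici (0:ℝ)) := by
  apply monotoneOn_of_deriv_nonneg (convex_Ici 0)
    (fun s hs => (hd s hs).continuousAt.continuousWithinAt)
  · intro s hs
    rw [interior_Ici] at hs
    exact (hd s (show (0:ℝ) ≤ s from le_of_lt hs)).differentiableAt.differentiableWithinAt
  · intro s hs
    rw [interior_Ici] at hs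
    rw [(hd s (show (0:ℝ) ≤ s from le_of_lt hs)).deriv]
    exact hpos s (show (0:ℝ) ≤ s from le_of_lt hs)

private lemma anti_Ici_bg {f f' : ℝ → ℝ}
    (hd : ∀ s ∈ Ici (0:ℝ), HasDerivAt f (f' s) s)
    (hneg : ∀ s ∈ Ici (0:ℝ), f' s ≤ 0) :
    AntitoneOn f (Ici (0:ℝ)) := by
  apply antitoneOn_of_deriv_nonpos (convex_Ici 0)
    (fun s hs => (hd s hs).continuousAt.continuousWithinAt)
  · intro s hs
    rw [interior_Ici] at hs
    exact (hd s (show (0:ℝ) ≤ s from le_of_lt hs)).differentiableAt.differentiableWithinAt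
  · intro s hs
    rw [interior_Ici] at hs
    rw [(hd s (show (0:ℝ) ≤ s from le_of_lt hs)).deriv]
    exact hneg s (show (0:ℝ) ≤ s from le_of_lt hs)

/-- for `ε > b` and initial data on the slow manifold, the
solutions of the full Beja–Goldman system converge, uniformly on `[t₀, ∞)` for
every `t₀ > 0`, to the solution of the reduced liquid-chartist system as `γ → 0⁺`. -/
theorem beja_goldman_liquid_chartist_tikhonov
    (a b r F ε : ℝ) (ha : 0 < a) (hb : 0 < b) (hr : 0 < r) (hF : 0 < F)
    (hε : 0 < ε) (hstab : ε > b)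
    (P₀ Ψ₀ : ℝ) (hΨ₀ : Ψ₀ = (a * (F - P₀) - r * b) / (ε - b))
    (P Ψ : ℝ → ℝ → ℝ)
    (hode : ∀ γ > (0 : ℝ), ∀ t ≥ (0 : ℝ),
      HasDerivAt (P γ) ((1 / ε) * (a * (F - P γ t) + b * (Ψ γ t - r))) t ∧
      HasDerivAt (Ψ γ)
        ((1 / γ) * ((1 / ε) * (a * (F - P γ t) + b * (Ψ γ t - r)) - Ψ γ t)) t)
    (hinit : ∀ γ > (0 : ℝ), P γ 0 = P₀ ∧ Ψ γ 0 = Ψ₀)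
    (Pbar Ψbar : ℝ → ℝ)
    (hPbar : Pbar = fun t => Real.exp (-(a / (ε - b)) * t) * (P₀ - (F - r * b / a))
      + F - r * b / a)
    (hΨbar : Ψbar = fun t => (a * (F - Pbar t) - r * b) / (ε - b)) :
    ∀ t₀ > (0 : ℝ), ∀ δ > (0 : ℝ), ∃ γ₀ > (0 : ℝ), ∀ γ : ℝ, 0 < γ → γ < γ₀ →
      ∀ t ≥ t₀, |P γ t - Pbar t| + |Ψ γ t - Ψbar t| < δ := by
  subst hPbar
  subst hΨbar
  intro t₀ ht₀ δ hδ
  have hεb : (0:ℝ) < ε - b := by linarith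
  have hane : a ≠ 0 := ha.ne'
  have hene : ε ≠ 0 := hε.ne'
  have hebne : ε - b ≠ 0 := hεb.ne'
  obtain ⟨μ, hμdef⟩ : ∃ μ : ℝ, μ = a / (ε - b) := ⟨_, rfl⟩
  have hμ : 0 < μ := hμdef ▸ div_pos ha hεb
  obtain ⟨lam, hlamdef⟩ : ∃ lam : ℝ, lam = (ε - b) / ε := ⟨_, rfl⟩
  have hlam : 0 < lam := hlamdef ▸ div_pos hεb hε
  have hlam1 : lam < 1 := by
    rw [hlamdef, div_lt_one hε]; linarith
  have hbe : b / ε = 1 - lam := by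
    rw [hlamdef]; field_simp; ring
  obtain ⟨K, hKdef⟩ : ∃ K : ℝ, K = μ * |Ψ₀| := ⟨_, rfl⟩
  have hK : 0 ≤ K := hKdef ▸ mul_nonneg hμ.le (abs_nonneg _)
  obtain ⟨C, hCdef⟩ : ∃ C : ℝ, C = ((ε - b) / a + 1) * (b / ε) + 1 := ⟨_, rfl⟩
  have hC : 0 < C := by rw [hCdef]; positivity
  refine ⟨min (min (lam * ε / (2 * μ * b)) (lam / (μ * b / ε + μ * lam / 2)))
      (δ * lam / (2 * C * (K + 1))), ?_, ?_⟩
  · apply lt_min (lt_min (by positivity) (by positivity)) (by positivity)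
  intro γ hγ hγlt t ht
  have hγne : γ ≠ 0 := hγ.ne'
  have hγ1 : γ < lam * ε / (2 * μ * b) := lt_of_lt_of_le hγlt
    (le_trans (min_le_left _ _) (min_le_left _ _))
  have hγ2 : γ < lam / (μ * b / ε + μ * lam / 2) := lt_of_lt_of_le hγlt
    (le_trans (min_le_left _ _) (min_le_right _ _))
  have hγ3 : γ < δ * lam / (2 * C * (K + 1)) := lt_of_lt_of_le hγlt (min_le_right _ _)
  have ht0 : (0:ℝ) ≤ t := le_trans ht₀.le ht
  -- slow/fast variables
  obtain ⟨q, hqdef⟩ : ∃ q : ℝ → ℝ, q = fun s => (a * (F - P γ s) - r * b) / (ε - b) := ⟨_, rfl⟩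
  obtain ⟨w, hwdef⟩ : ∃ w : ℝ → ℝ, w = fun s => Ψ γ s - q s := ⟨_, rfl⟩
  obtain ⟨c, hcdef⟩ : ∃ c : ℝ, c = μ * b / ε - lam / γ := ⟨_, rfl⟩
  have hq0 : q 0 = Ψ₀ := by simp only [hqdef]; rw [(hinit γ hγ).1, hΨ₀]
  have hw0 : w 0 = 0 := by
    simp only [hwdef]; rw [(hinit γ hγ).2, hq0]; ring
  -- derivative of q
  have hqD : ∀ s ∈ Ici (0:ℝ), HasDerivAt q (-μ * q s - μ * (b/ε) * w s) s := by
    intro s hs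
    have h2 := ((((hode γ hγ s hs).1.const_sub F).const_mul a).sub_const (r * b)).div_const (ε - b)
    convert h2 using 1
    any_goals rfl
    simp only [hqdef, hwdef, hμdef]
    field_simp
    ring
  -- derivative of w
  have hwD : ∀ s ∈ Ici (0:ℝ), HasDerivAt w (c * w s + μ * q s) s := by
    intro s hs
    have h2 := (hode γ hγ s hs).2.sub (hqD s hs)
    convert h2 using 1
    any_goals rfl
    · exact hwdef
    simp only [hqdef, hwdef, hμdef, hcdef, hlamdef]
    field_simp
    ring
  -- derivative of the reduced solution Ψbar
  have hΨbarD : ∀ s : ℝ, HasDerivAt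
      (fun u => (a * (F - (Real.exp (-μ * u) * (P₀ - (F - r * b / a))
        + F - r * b / a)) - r * b) / (ε - b))
      (-μ * ((a * (F - (Real.exp (-μ * s) * (P₀ - (F - r * b / a))
        + F - r * b / a)) - r * b) / (ε - b))) s := by
    intro s
    have h1 : HasDerivAt (fun u : ℝ => -μ * u) (-μ) s := by
      simpa using (hasDerivAt_id s).const_mul (-μ)
    have h4 := (((((h1.exp.mul_const (P₀ - (F - r * b / a))).add_const F).sub_const
      (r * b / a)).const_sub F).const_mul a).sub_const (r * b) |>.div_const (ε - b)
    convert h4 using 1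
    any_goals rfl
    simp only [hμdef]
    field_simp
    ring
  -- smallness of c
  have hc2 : μ * lam + 2 * c ≤ 0 := by
    have hpos : 0 < μ * b / ε + μ * lam / 2 := by positivity
    have h2 : γ * (μ * b / ε + μ * lam / 2) < lam := (lt_div_iff₀ hpos).mp hγ2
    have h3 : μ * b / ε + μ * lam / 2 < lam / γ := by
      rw [lt_div_iff₀ hγ]
      have he : (μ * b / ε + μ * lam / 2) * γ = γ * (μ * b / ε + μ * lam / 2) := by ring
      linarith
    rw [hcdef]; linarith
  have hc0 : c < -(lam / (2 * γ)) := by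
    have hpos : 0 < 2 * μ * b := by positivity
    have h1 : γ * (2 * μ * b) < lam * ε := (lt_div_iff₀ hpos).mp hγ1
    have h2 : μ * b / ε < lam / (2 * γ) := by
      rw [div_lt_div_iff₀ hε (by positivity)]
      have he : μ * b * (2 * γ) = γ * (2 * μ * b) := by ring
      linarith
    have hhalf : lam / (2 * γ) + lam / (2 * γ) = lam / γ := by
      field_simp; ring
    rw [hcdef]; linarith
  have hcneg : 0 < -c := by
    have h0 : 0 < lam / (2 * γ) := by positivity
    linarith
  have hcne : c ≠ 0 := (neg_pos.mp hcneg).ne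
  -- energy estimate
  have hVanti : AntitoneOn (fun s => q s ^ 2 + w s ^ 2) (Ici (0:ℝ)) := by
    apply anti_Ici_bg
      (f' := fun s => 2 * q s * (-μ * q s - μ * (b/ε) * w s) + 2 * w s * (c * w s + μ * q s))
    · intro s hs
      have h1 := ((hqD s hs).pow 2).add ((hwD s hs).pow 2)
      convert h1 using 1
      any_goals rfl
      push_cast
      ring
    · intro s hs
      rw [hbe]
      nlinarith [mul_nonneg (mul_nonneg hμ.le hlam.le) (sq_nonneg (q s - w s)),
        mul_nonneg (mul_nonneg hμ.le (by linarith : (0:ℝ) ≤ 2 - lam)) (sq_nonneg (q s)),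
        mul_nonpos_of_nonpos_of_nonneg hc2 (sq_nonneg (w s)), sq_nonneg (w s), sq_nonneg (q s)]
  have hqabs : ∀ s ∈ Ici (0:ℝ), |q s| ≤ |Ψ₀| := by
    intro s hs
    have h := hVanti (self_mem_Ici) hs hs
    simp only [hq0, hw0] at h
    nlinarith [sq_abs (q s), sq_abs Ψ₀, abs_nonneg (q s), abs_nonneg Ψ₀, sq_nonneg (w s)]
  -- bound on w via integrating factor
  have hgD : ∀ s ∈ Ici (0:ℝ), HasDerivAt (fun u => Real.exp (-c * u) * w u)
      (Real.exp (-c * s) * (μ * q s)) s := by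
    intro s hs
    have h1 : HasDerivAt (fun u : ℝ => Real.exp (-c * u)) (Real.exp (-c * s) * -c) s := by
      simpa using ((hasDerivAt_id s).const_mul (-c)).exp
    have h2 := h1.mul (hwD s hs)
    convert h2 using 1
    any_goals rfl
    ring
  have hexpD : ∀ s : ℝ, HasDerivAt (fun u : ℝ => Real.exp (-c * u)) (Real.exp (-c * s) * -c) s := by
    intro s
    simpa using ((hasDerivAt_id s).const_mul (-c)).exp
  have hFup : MonotoneOn (fun u => K * (Real.exp (-c * u) - 1) / (-c)
      - Real.exp (-c * u) * w u) (Ici (0:ℝ)) := by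
    apply mono_Ici_bg (f' := fun u => K * (Real.exp (-c * u) * -c) / (-c)
      - Real.exp (-c * u) * (μ * q u))
    · intro u hu
      exact ((((hexpD u).sub_const 1).const_mul K).div_const (-c)).sub (hgD u hu)
    · intro u hu
      have e1 : K * (Real.exp (-c * u) * -c) / (-c) = K * Real.exp (-c * u) := by
        field_simp
      rw [e1]
      have h2 : μ * q u ≤ K := by
        rw [hKdef]
        calc μ * q u ≤ μ * |q u| := mul_le_mul_of_nonneg_left (le_abs_self _) hμ.le
          _ ≤ μ * |Ψ₀| := mul_le_mul_of_nonneg_left (hqabs u hu) hμ.le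
      have h3 := mul_nonneg (Real.exp_pos (-c * u)).le (sub_nonneg.mpr h2)
      nlinarith [h3]
  have hFdn : MonotoneOn (fun u => K * (Real.exp (-c * u) - 1) / (-c)
      + Real.exp (-c * u) * w u) (Ici (0:ℝ)) := by
    apply mono_Ici_bg (f' := fun u => K * (Real.exp (-c * u) * -c) / (-c)
      + Real.exp (-c * u) * (μ * q u))
    · intro u hu
      exact ((((hexpD u).sub_const 1).const_mul K).div_const (-c)).add (hgD u hu)
    · intro u hu
      have e1 : K * (Real.exp (-c * u) * -c) / (-c) = K * Real.exp (-c * u) := by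
        field_simp
      rw [e1]
      have h2 : -K ≤ μ * q u := by
        rw [hKdef]
        have h4 : |μ * q u| ≤ μ * |Ψ₀| := by
          rw [abs_mul, abs_of_pos hμ]
          exact mul_le_mul_of_nonneg_left (hqabs u hu) hμ.le
        linarith [neg_abs_le (μ * q u)]
      have h3 := mul_nonneg (Real.exp_pos (-c * u)).le (by linarith : (0:ℝ) ≤ μ * q u + K)
      nlinarith [h3]
  have hwbound : ∀ s ∈ Ici (0:ℝ), |w s| ≤ K / (-c) := by
    intro s hs
    have hup := hFup self_mem_Ici hs hs
    have hdn := hFdn self_mem_Ici hs hs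
    simp only [hw0, mul_zero, neg_zero, mul_zero, Real.exp_zero, sub_self, zero_mul,
      mul_zero, zero_div, sub_zero, add_zero] at hup hdn
    have hB : K * (Real.exp (-c * s) - 1) / (-c) ≤ Real.exp (-c * s) * (K / (-c)) := by
      rw [div_le_iff₀ hcneg]
      have e2 : Real.exp (-c * s) * (K / -c) * -c = Real.exp (-c * s) * K := by
        field_simp
      rw [e2]
      nlinarith [hK, Real.exp_pos (-c * s)]
    have habs : |Real.exp (-c * s) * w s| ≤ Real.exp (-c * s) * (K / (-c)) := by
      rw [abs_le]
      constructor
      · linarith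
      · linarith
    rw [abs_mul, abs_of_pos (Real.exp_pos _)] at habs
    exact le_of_mul_le_mul_left habs (Real.exp_pos _)
  -- the error function E = q - Ψbar
  obtain ⟨E, hEdef⟩ : ∃ E : ℝ → ℝ, E = fun u => q u -
      (a * (F - (Real.exp (-μ * u) * (P₀ - (F - r * b / a)) + F - r * b / a)) - r * b) / (ε - b) :=
    ⟨_, rfl⟩
  have hE0 : E 0 = 0 := by
    simp only [hEdef, mul_zero, Real.exp_zero, one_mul]
    rw [hq0, hΨ₀]
    field_simp
    ring
  have hED : ∀ s ∈ Ici (0:ℝ), HasDerivAt E (-μ * E s - μ * (b/ε) * w s) s := by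
    intro s hs
    have h2 := (hqD s hs).sub (hΨbarD s)
    rw [hEdef]
    convert h2 using 1
    any_goals rfl
    simp only
    ring
  have hexpD2 : ∀ s : ℝ, HasDerivAt (fun u : ℝ => Real.exp (μ * u)) (Real.exp (μ * s) * μ) s := by
    intro s
    simpa using ((hasDerivAt_id s).const_mul μ).exp
  obtain ⟨W, hWdef⟩ : ∃ W : ℝ, W = K / (-c) := ⟨_, rfl⟩
  have hW0 : 0 ≤ W := hWdef ▸ div_nonneg hK hcneg.le
  have hbεpos : 0 < b / ε := div_pos hb hε
  have hg2D : ∀ s ∈ Ici (0:ℝ), HasDerivAt (fun u => Real.exp (μ * u) * E u)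
      (-(Real.exp (μ * s) * (μ * (b/ε) * w s))) s := by
    intro s hs
    have h2 := (hexpD2 s).mul (hED s hs)
    convert h2 using 1
    any_goals rfl
    ring
  have hGup : MonotoneOn (fun u => (b/ε) * W * (Real.exp (μ * u) - 1)
      - Real.exp (μ * u) * E u) (Ici (0:ℝ)) := by
    apply mono_Ici_bg (f' := fun u => (b/ε) * W * (Real.exp (μ * u) * μ)
      - (-(Real.exp (μ * u) * (μ * (b/ε) * w u))))
    · intro u hu
      exact (((hexpD2 u).sub_const 1).const_mul ((b/ε) * W)).sub (hg2D u hu)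
    · intro u hu
      have h4 : -W ≤ w u := by
        have h5 := hwbound u hu
        rw [hWdef]
        linarith [(abs_le.mp h5).1]
      have h6 := mul_nonneg (mul_nonneg (mul_nonneg (Real.exp_pos (μ * u)).le hμ.le)
        hbεpos.le) (by linarith : (0:ℝ) ≤ W + w u)
      nlinarith [h6]
  have hGdn : MonotoneOn (fun u => (b/ε) * W * (Real.exp (μ * u) - 1)
      + Real.exp (μ * u) * E u) (Ici (0:ℝ)) := by
    apply mono_Ici_bg (f' := fun u => (b/ε) * W * (Real.exp (μ * u) * μ)
      + (-(Real.exp (μ * u) * (μ * (b/ε) * w u))))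
    · intro u hu
      exact (((hexpD2 u).sub_const 1).const_mul ((b/ε) * W)).add (hg2D u hu)
    · intro u hu
      have h4 : w u ≤ W := by
        have h5 := hwbound u hu
        rw [hWdef]
        linarith [(abs_le.mp h5).2]
      have h6 := mul_nonneg (mul_nonneg (mul_nonneg (Real.exp_pos (μ * u)).le hμ.le)
        hbεpos.le) (by linarith : (0:ℝ) ≤ W - w u)
      nlinarith [h6]
  have hEbound : ∀ s ∈ Ici (0:ℝ), |E s| ≤ (b/ε) * W := by
    intro s hs
    have hup := hGup self_mem_Ici hs hs
    have hdn := hGdn self_mem_Ici hs hs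
    simp only [hE0, mul_zero, Real.exp_zero, sub_self, mul_zero, add_zero, sub_zero,
      zero_sub, neg_zero, zero_add] at hup hdn
    have hB : (b/ε) * W * (Real.exp (μ * s) - 1) ≤ Real.exp (μ * s) * ((b/ε) * W) := by
      nlinarith [mul_nonneg hbεpos.le hW0, Real.exp_pos (μ * s)]
    have habs : |Real.exp (μ * s) * E s| ≤ Real.exp (μ * s) * ((b/ε) * W) := by
      rw [abs_le]
      constructor
      · linarith
      · linarith
    rw [abs_mul, abs_of_pos (Real.exp_pos _)] at habs
    exact le_of_mul_le_mul_left habs (Real.exp_pos _)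
  -- final assembly
  show |P γ t - (Real.exp (-(a / (ε - b)) * t) * (P₀ - (F - r * b / a)) + F - r * b / a)|
      + |Ψ γ t - (a * (F - (Real.exp (-(a / (ε - b)) * t) * (P₀ - (F - r * b / a))
        + F - r * b / a)) - r * b) / (ε - b)| < δ
  rw [← hμdef]
  have hPP : P γ t - (Real.exp (-μ * t) * (P₀ - (F - r * b / a)) + F - r * b / a)
      = -((ε - b) / a) * E t := by
    simp only [hEdef, hqdef]
    field_simp
    ring
  have hΨΨ : Ψ γ t - (a * (F - (Real.exp (-μ * t) * (P₀ - (F - r * b / a))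
      + F - r * b / a)) - r * b) / (ε - b) = E t + w t := by
    simp only [hEdef, hwdef]
    ring
  rw [hPP, hΨΨ, abs_mul, abs_neg, abs_of_pos (div_pos hεb ha)]
  have h1 := hEbound t ht0
  have h2 : |w t| ≤ W := by
    have := hwbound t ht0
    rw [hWdef]; exact this
  have h3 : |E t + w t| ≤ (b/ε) * W + W := le_trans (abs_add_le _ _) (by linarith)
  have h5 := mul_le_mul_of_nonneg_left h1 (div_pos hεb ha).le
  have h4 : (ε - b) / a * |E t| + |E t + w t| ≤ C * W := by
    calc (ε - b) / a * |E t| + |E t + w t|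
        ≤ (ε - b) / a * ((b/ε) * W) + ((b/ε) * W + W) := by linarith
      _ = C * W := by rw [hCdef]; ring
  have hWle : W ≤ 2 * K * γ / lam := by
    rw [hWdef]
    have h6 : lam / (2 * γ) ≤ -c := by linarith
    have h7 : K / (-c) ≤ K / (lam / (2 * γ)) := by
      gcongr
    have h8 : K / (lam / (2 * γ)) = 2 * K * γ / lam := by
      field_simp
    linarith
  have h9 : γ * (2 * C * (K + 1)) < δ * lam := (lt_div_iff₀ (by positivity)).mp hγ3
  have h10 : C * (2 * K * γ / lam) < δ := by
    have e3 : C * (2 * K * γ / lam) = (C * (2 * K * γ)) / lam := by ring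
    rw [e3, div_lt_iff₀ hlam]
    have e4 : γ * (2 * C * (K + 1)) = C * (2 * K * γ) + 2 * (C * γ) := by ring
    have e5 : 0 ≤ C * γ := mul_nonneg hC.le hγ.le
    linarith
  have hCW : C * W ≤ C * (2 * K * γ / lam) := mul_le_mul_of_nonneg_left hWle hC.le
  linarith
end
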